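/- Let Σ ∈ ℝ^{m×m} be a symmetric positive definite matrix and κ ∈ ℝ^m with κ_i ≥ 0 for all i. Define the feasible set F := { χ ∈ [0,1]^m : χ_i ≤ κ_i · Σ_{j=1}^m χ_j for all i } and the Sharpe objective φ(χ) := (Σ_{j=1}^m χ_j)/√(χᵀΣχ) for χ ≠ 0 and φ(0) := 0. Suppose F ∩ { χ : Σ_j χ_j = 1 } is nonempty and let x* minimize χᵀΣχ over F ∩ { χ : Σ_j χ_j = 1 }. Then x* maximizes φ over all of F, i.e., φ(χ) ≤ φ(x*) for every χ ∈ F. -/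

import Mathlib

open Matrix

/-- Fractional-programming reduction for the Sharpe ratio: if `xs` minimizes the quadratic
form `χᵀ Σ χ` over the relaxed self-consistent vectors with `∑ χ = 1`, then `xs` maximizes
the Sharpe objective `φ(χ) = (∑ χ)/√(χᵀ Σ χ)` (with `φ 0 = 0`) over the whole feasible set
`F = {χ ∈ [0,1]^m : χ_i ≤ κ_i ∑_j χ_j}`. -/
theorem stmt_14 (m : ℕ) (S : Matrix (Fin m) (Fin m) ℝ) (hS : S.PosDef)
    (κ : Fin m → ℝ) (hκ : ∀ i, 0 ≤ κ i)
    (F : Set (Fin m → ℝ))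
    (hF : F = {χ | (∀ i, χ i ∈ Set.Icc (0 : ℝ) 1) ∧ ∀ i, χ i ≤ κ i * ∑ j, χ j})
    (φ : (Fin m → ℝ) → ℝ)
    (hφ : ∀ χ, χ ≠ 0 → φ χ = (∑ j, χ j) / Real.sqrt (χ ⬝ᵥ S.mulVec χ))
    (hφ0 : φ 0 = 0)
    (xs : Fin m → ℝ) (hxsF : xs ∈ F) (hxs1 : ∑ j, xs j = 1)
    (hxsmin : ∀ χ ∈ F, (∑ j, χ j = 1) → xs ⬝ᵥ S.mulVec xs ≤ χ ⬝ᵥ S.mulVec χ) :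
    ∀ χ ∈ F, φ χ ≤ φ xs := by
  -- xs ≠ 0
  have hxs0 : xs ≠ 0 := by
    intro h
    rw [h] at hxs1
    simp at hxs1
  have hQxs : 0 < xs ⬝ᵥ S.mulVec xs := by
    have := hS.dotProduct_mulVec_pos hxs0
    simpa using this
  have hφxs : φ xs = 1 / Real.sqrt (xs ⬝ᵥ S.mulVec xs) := by
    rw [hφ xs hxs0, hxs1]
  have hsqxs : 0 < Real.sqrt (xs ⬝ᵥ S.mulVec xs) := Real.sqrt_pos.mpr hQxs
  intro χ hχ
  by_cases hχ0 : χ = 0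
  · subst hχ0
    rw [hφ0, hφxs]
    positivity
  · -- sum is positive
    rw [hF] at hχ hxsF
    obtain ⟨hIcc, hcon⟩ := hχ
    have hnn : ∀ j, 0 ≤ χ j := fun j => (hIcc j).1
    have hs0 : 0 < ∑ j, χ j := by
      obtain ⟨i, hi⟩ := Function.ne_iff.mp hχ0
      have hi' : 0 < χ i := lt_of_le_of_ne (hnn i) (Ne.symm hi)
      exact Finset.sum_pos' (fun j _ => hnn j) ⟨i, Finset.mem_univ i, hi'⟩
    set s := ∑ j, χ j with hs
    have hle : ∀ i, χ i ≤ s := fun i =>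
      Finset.single_le_sum (fun j _ => hnn j) (Finset.mem_univ i)
    -- the rescaled vector
    set y := s⁻¹ • χ with hy
    have hsumy : ∑ j, y j = 1 := by
      simp [hy, ← Finset.mul_sum, inv_mul_cancel₀ hs0.ne']
      exact inv_mul_cancel₀ hs0.ne'
    have hyF : y ∈ F := by
      rw [hF]
      constructor
      · intro i
        constructor
        · exact mul_nonneg (inv_nonneg.mpr hs0.le) (hnn i)
        · simp only [hy, Pi.smul_apply, smul_eq_mul]
          calc s⁻¹ * χ i ≤ s⁻¹ * s := by
                exact mul_le_mul_of_nonneg_left (hle i) (inv_nonneg.mpr hs0.le)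
            _ = 1 := inv_mul_cancel₀ hs0.ne'
      · intro i
        rw [hsumy, mul_one]
        simp only [hy, Pi.smul_apply, smul_eq_mul]
        have := hcon i
        calc s⁻¹ * χ i ≤ s⁻¹ * (κ i * s) :=
              mul_le_mul_of_nonneg_left this (inv_nonneg.mpr hs0.le)
          _ = κ i := by field_simp
    have hQy : y ⬝ᵥ S.mulVec y = s⁻¹ * s⁻¹ * (χ ⬝ᵥ S.mulVec χ) := by
      rw [hy, Matrix.mulVec_smul, smul_dotProduct, dotProduct_smul]
      ring_nf
    have hmin := hxsmin y hyF hsumy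
    rw [hQy] at hmin
    -- so s^2 * Qxs ≤ Qχ
    have hQχ : 0 < χ ⬝ᵥ S.mulVec χ := by simpa using hS.dotProduct_mulVec_pos hχ0
    have key : s ^ 2 * (xs ⬝ᵥ S.mulVec xs) ≤ χ ⬝ᵥ S.mulVec χ := by
      have h2 : (0:ℝ) < s ^ 2 := by positivity
      calc s ^ 2 * (xs ⬝ᵥ S.mulVec xs)
          ≤ s ^ 2 * (s⁻¹ * s⁻¹ * (χ ⬝ᵥ S.mulVec χ)) :=
            mul_le_mul_of_nonneg_left hmin h2.le
        _ = χ ⬝ᵥ S.mulVec χ := by field_simp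
    rw [hφ χ hχ0, hφxs, ← hs]
    rw [div_le_div_iff₀ (Real.sqrt_pos.mpr hQχ) hsqxs]
    have : s * Real.sqrt (xs ⬝ᵥ S.mulVec xs)
        = Real.sqrt (s ^ 2 * (xs ⬝ᵥ S.mulVec xs)) := by
      rw [Real.sqrt_mul (by positivity), Real.sqrt_sq hs0.le]
    rw [this, one_mul]
    exact Real.sqrt_le_sqrt key
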